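/- Let x be a nonzero element of a field with x ≠ ±1, set c = x (playing the role of cos γ). Define M_{n;k,l} via the polynomials P as M_{n;k,l} = a·P_{n,k+1,l}(c) + b·P_{n,k+1,l-1}(c) for arbitrary fixed field constants a, b. Then the recurrence M_{n+1;k+1,l} − c·M_{n;k,l-1} = c·M_{n;k,l} holds for all integers n ≥ 1, 0 ≤ k ≤ n-1, 0 ≤ l ≤ n+1, with M_{n;k,l-1} interpreted as 0 when l = 0. -/

import Mathlib

/-- Binomial coefficient C(a,b) for integer arguments, with the convention
    C(a,b) = 0 when b < 0 or b > a. -/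
def intChoose (a b : ℤ) : ℤ :=
  if 0 ≤ b ∧ b ≤ a then (a.toNat.choose b.toNat : ℤ) else 0

/-- P_{n,k,l}(x) = ∑_{s=0}^{l} (-1)^s C(n-k,s) C(n-s-1,l-s) x^{n-2s}, as a function of
    an (invertible) field element x; for l < 0 all terms vanish (the sum degenerates to
    the single s = 0 term containing C(n-1,l) = 0), so P_{n,k,l} = 0 for l < 0. -/
def Ppoly {K : Type*} [Field K] (x : K) (n k l : ℤ) : K :=
  ∑ s ∈ Finset.range (l.toNat + 1),
    (-1 : K) ^ s * (intChoose (n - k) (s : ℤ) : K) *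
      (intChoose (n - (s : ℤ) - 1) (l - (s : ℤ)) : K) * x ^ (n - 2 * (s : ℤ))

/-- M_{n;k,l} = a·P_{n,k+1,l}(x) + b·P_{n,k+1,l-1}(x) for fixed constants a, b. -/
def Mmat {K : Type*} [Field K] (x a b : K) (n k : ℕ) (l : ℤ) : K :=
  a * Ppoly x (n : ℤ) ((k : ℤ) + 1) l + b * Ppoly x (n : ℤ) ((k : ℤ) + 1) (l - 1)

lemma intChoose_neg (a b : ℤ) (hb : b < 0) : intChoose a b = 0 := by
  simp [intChoose]; omega

lemma intChoose_lt (a b : ℤ) (h : a < b) : intChoose a b = 0 := by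
  simp [intChoose]; omega

lemma intChoose_pascal (a b : ℤ) (h : ¬(a = 0 ∧ b = 0)) :
    intChoose a b = intChoose (a - 1) b + intChoose (a - 1) (b - 1) := by
  rcases lt_or_ge b 0 with hb | hb
  · rw [intChoose_neg _ _ hb, intChoose_neg _ _ hb, intChoose_neg _ _ (by omega)]; ring
  rcases hb.eq_or_lt with hb0 | hb1
  · subst hb0
    have ha : a ≠ 0 := fun h' => h ⟨h', rfl⟩
    rcases lt_or_gt_of_ne ha with ha' | ha'
    · rw [intChoose_lt _ _ (by omega), intChoose_lt _ _ (by omega),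
        intChoose_neg _ _ (by omega)]; ring
    · rw [intChoose_neg (a - 1) (0 - 1 : ℤ) (by omega)]
      have h1 : (0:ℤ) ≤ a := le_of_lt ha'
      have h2 : (0:ℤ) ≤ a - 1 := by omega
      simp [intChoose, h1, h2]; omega
  · rcases lt_or_ge a b with hab | hab
    · rw [intChoose_lt _ _ hab, intChoose_lt _ _ (by omega), intChoose_lt _ _ (by omega)]
      ring
    · have ha : 1 ≤ a := le_trans hb1 hab
      have h1 : a.toNat = (a - 1).toNat + 1 := by omega
      have h2 : b.toNat = (b - 1).toNat + 1 := by omega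
      simp only [intChoose, if_pos (⟨hb, hab⟩ : 0 ≤ b ∧ b ≤ a)]
      rw [h1, h2, Nat.choose_succ_succ]
      rcases lt_or_ge (a - 1) b with hab1 | hab1
      · rw [Nat.choose_eq_zero_of_lt (show (a-1).toNat < (b-1).toNat + 1 by omega)]
        rw [if_neg (by omega), if_pos (⟨by omega, by omega⟩ : 0 ≤ b - 1 ∧ b - 1 ≤ a - 1)]
        push_cast; ring
      · rw [if_pos ⟨hb, hab1⟩, if_pos (⟨by omega, by omega⟩ : 0 ≤ b - 1 ∧ b - 1 ≤ a - 1)]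
        push_cast [Nat.succ_eq_add_one]; ring

lemma Ppoly_ext {K : Type*} [Field K] (x : K) (n k l : ℤ) (m : ℕ) (hm : l.toNat ≤ m) :
    Ppoly x n k l = ∑ s ∈ Finset.range (m + 1),
      (-1 : K) ^ s * (intChoose (n - k) (s : ℤ) : K) *
        (intChoose (n - (s : ℤ) - 1) (l - (s : ℤ)) : K) * x ^ (n - 2 * (s : ℤ)) := by
  apply Finset.sum_subset (Finset.range_subset_range.2 (by omega))
  intro s hs hns
  simp only [Finset.mem_range] at hs hns
  rw [intChoose_neg (n - s - 1) (l - s) (by omega)]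
  push_cast; ring

lemma Ppoly_key {K : Type*} [Field K] (x : K) (hx0 : x ≠ 0) (n k : ℕ) (hk : 1 ≤ k)
    (l : ℤ) :
    Ppoly x ((n : ℤ) + 1) ((k : ℤ) + 1) l
      = x * (Ppoly x (n : ℤ) (k : ℤ) (l - 1) + Ppoly x (n : ℤ) (k : ℤ) l) := by
  rw [Ppoly_ext x (n : ℤ) (k : ℤ) (l - 1) l.toNat (by omega),
    Ppoly_ext x (n : ℤ) (k : ℤ) l l.toNat (le_refl _)]
  unfold Ppoly
  rw [mul_add, Finset.mul_sum, Finset.mul_sum, ← Finset.sum_add_distrib]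
  apply Finset.sum_congr rfl
  intro s hs
  simp only [Finset.mem_range] at hs
  have hnk : ((n : ℤ) + 1) - ((k : ℤ) + 1) = (n : ℤ) - k := by ring
  have hns : ((n : ℤ) + 1) - (s : ℤ) - 1 = (n : ℤ) - s := by ring
  rw [hnk, hns]
  by_cases hbad : (n : ℤ) - s = 0 ∧ l - s = 0
  · -- then s = n and s = l, and intChoose (n - k) s = 0 since k ≥ 1
    have h0 : intChoose ((n : ℤ) - k) (s : ℤ) = 0 := by
      apply intChoose_lt
      omega
    rw [h0]
    push_cast
    ring
  · rw [intChoose_pascal _ _ hbad]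
    have hl1 : l - 1 - (s : ℤ) = l - s - 1 := by ring
    have hxp : x ^ ((n : ℤ) + 1 - 2 * (s : ℤ)) = x ^ ((n : ℤ) - 2 * (s : ℤ)) * x := by
      rw [← zpow_add_one₀ hx0]
      congr 1
      ring
    rw [hl1, hxp]
    push_cast
    ring

/-- The recurrence M_{n+1;k+1,l} − c·M_{n;k,l-1} = c·M_{n;k,l} (with c = x), for
    n ≥ 1, 0 ≤ k ≤ n-1, 0 ≤ l ≤ n+1; for l = 0 the term M_{n;k,l-1} vanishes
    automatically since P_{n,k,l} = 0 for l < 0. -/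
theorem Mmat_recurrence_one {K : Type*} [Field K] (x : K) (hx0 : x ≠ 0)
    (hx1 : x ≠ 1) (hx2 : x ≠ -1) (a b : K) (n k l : ℕ)
    (hn : 1 ≤ n) (hk : k ≤ n - 1) (hl : l ≤ n + 1) :
    Mmat x a b (n + 1) (k + 1) (l : ℤ) - x * Mmat x a b n k ((l : ℤ) - 1)
      = x * Mmat x a b n k (l : ℤ) := by
  have key : ∀ m : ℤ, Ppoly x ((n : ℤ) + 1) (((k : ℕ) + 1 : ℤ) + 1) m
      = x * (Ppoly x (n : ℤ) ((k : ℤ) + 1) (m - 1) + Ppoly x (n : ℤ) ((k : ℤ) + 1) m) := by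
    intro m
    have := Ppoly_key x hx0 n (k + 1) (by omega) m
    push_cast at this ⊢
    convert this using 3 <;> push_cast <;> ring
  unfold Mmat
  push_cast
  rw [key, key]
  ring
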